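/- Let q ≥ 1 be an integer, α > 0 real, δ ∈ {0, 1}, θ ∈ ℝ, and z ∈ ℂ. Set ζ := −e^{−iθ}·z. Then f_q(e^{iθ}; z) + f_{q−1}(e^{iθ}; z) − ((−z/α)^q/q!)·δ = (−e^{iθ})^q · ( f̃_q(ζ) − e^{−iθ}·f̃_{q−1}(ζ) − ((−ζ/α)^q/q!)·δ ), where f_m(λ; w) := Σ_{j=0}^{m} ((j+1)w)^{m−j}/(m−j)! · (−λ)^{j} and f̃_m(ζ) := Σ_{j=0}^{m} ((j+1)ζ)^{m−j}/(m−j)!. In particular, the zeros z(θ) of the root-locus polynomial p_q(z; θ) := f_q(e^{iθ}; z) + f_{q−1}(e^{iθ}; z) − ((−z/α)^q/q!)·δ correspond bijectively, via ζ = −e^{−iθ}z, to the zeros of the variant polynomial p̃_q(ζ; θ) := f̃_q(ζ) − e^{−iθ}f̃_{q−1}(ζ) − ((−ζ/α)^q/q!)·δ, and corresponding zeros have equal modulus. -/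

import Mathlib

open Finset

/-- `f_m(λ; w) := Σ_{j=0}^{m} ((j+1)w)^{m−j}/(m−j)! · (−λ)^{j}`. -/
noncomputable def fPoly (m : ℕ) (l w : ℂ) : ℂ :=
  ∑ j ∈ range (m + 1),
    (((j + 1 : ℕ) : ℂ) * w) ^ (m - j) / ((Nat.factorial (m - j) : ℂ)) * (-l) ^ j

/-- `f̃_m(ζ) := Σ_{j=0}^{m} ((j+1)ζ)^{m−j}/(m−j)!`. -/
noncomputable def ftPoly (m : ℕ) (ζ : ℂ) : ℂ :=
  ∑ j ∈ range (m + 1),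
    (((j + 1 : ℕ) : ℂ) * ζ) ^ (m - j) / ((Nat.factorial (m - j) : ℂ))

lemma fPoly_neg_mul (m : ℕ) (l ζ : ℂ) :
    fPoly m l (-l * ζ) = (-l) ^ m * ftPoly m ζ := by
  unfold fPoly ftPoly
  rw [Finset.mul_sum]
  refine Finset.sum_congr rfl fun j hj => ?_
  have hjm : j ≤ m := Nat.lt_succ_iff.mp (Finset.mem_range.mp hj)
  have h1 : (((j + 1 : ℕ) : ℂ) * (-l * ζ)) ^ (m - j)
      = (-l) ^ (m - j) * (((j + 1 : ℕ) : ℂ) * ζ) ^ (m - j) := by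
    rw [← mul_pow]; congr 1; ring
  rw [h1]
  have h2 : (-l) ^ (m - j) * (-l) ^ j = (-l) ^ m := by
    rw [← pow_add, Nat.sub_add_cancel hjm]
  rw [← h2]; ring

theorem root_locus_transformation (q : ℕ) (hq : 1 ≤ q) (α : ℝ) (hα : 0 < α)
    (δ : ℂ) (hδ : δ = 0 ∨ δ = 1) (θ : ℝ) (z ζ : ℂ)
    (hζ : ζ = -Complex.exp (-(θ : ℂ) * Complex.I) * z) :
    (fPoly q (Complex.exp ((θ : ℂ) * Complex.I)) z
        + fPoly (q - 1) (Complex.exp ((θ : ℂ) * Complex.I)) z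
        - (-z / (α : ℂ)) ^ q / (Nat.factorial q : ℂ) * δ
      = (-Complex.exp ((θ : ℂ) * Complex.I)) ^ q
        * (ftPoly q ζ - Complex.exp (-(θ : ℂ) * Complex.I) * ftPoly (q - 1) ζ
            - (-ζ / (α : ℂ)) ^ q / (Nat.factorial q : ℂ) * δ)) ∧
    ((fPoly q (Complex.exp ((θ : ℂ) * Complex.I)) z
        + fPoly (q - 1) (Complex.exp ((θ : ℂ) * Complex.I)) z
        - (-z / (α : ℂ)) ^ q / (Nat.factorial q : ℂ) * δ = 0)
      ↔ (ftPoly q ζ - Complex.exp (-(θ : ℂ) * Complex.I) * ftPoly (q - 1) ζ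
            - (-ζ / (α : ℂ)) ^ q / (Nat.factorial q : ℂ) * δ = 0)) ∧
    ‖ζ‖ = ‖z‖ := by
  set l := Complex.exp ((θ : ℂ) * Complex.I) with hl
  set e := Complex.exp (-(θ : ℂ) * Complex.I) with he
  have hle : l * e = 1 := by
    rw [hl, he, ← Complex.exp_add]; ring_nf; exact Complex.exp_zero
  have hz : z = -l * ζ := by
    rw [hζ]
    have : -l * (-e * z) = (l * e) * z := by ring
    rw [this, hle, one_mul]
  obtain ⟨n, rfl⟩ : ∃ n, q = n + 1 := ⟨q - 1, (Nat.succ_pred_eq_of_pos hq).symm⟩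
  simp only [Nat.add_sub_cancel]
  have hmain :
      fPoly (n + 1) l z + fPoly n l z
          - (-z / (α : ℂ)) ^ (n + 1) / (Nat.factorial (n + 1) : ℂ) * δ
        = (-l) ^ (n + 1) * (ftPoly (n + 1) ζ - e * ftPoly n ζ
            - (-ζ / (α : ℂ)) ^ (n + 1) / (Nat.factorial (n + 1) : ℂ) * δ) := by
    rw [hz, fPoly_neg_mul, fPoly_neg_mul]
    have h3 : (-(-l * ζ) / (α : ℂ)) ^ (n + 1) = (-l) ^ (n + 1) * (-ζ / (α : ℂ)) ^ (n + 1) := by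
      rw [← mul_pow]; congr 1; ring
    rw [h3]
    linear_combination (-(-l) ^ n * ftPoly n ζ) * hle
  refine ⟨hmain, ?_, ?_⟩
  · rw [hmain]
    have hne : (-l) ^ (n + 1) ≠ 0 := pow_ne_zero _ (neg_ne_zero.mpr (Complex.exp_ne_zero _))
    constructor
    · intro h; exact (mul_eq_zero.mp h).resolve_left hne
    · intro h; rw [h, mul_zero]
  · have he1 : ‖e‖ = 1 := by
      rw [he]; simp [Complex.norm_exp]
    rw [hζ, norm_mul, norm_neg, he1, one_mul]
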